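/- Let c ∈ ℂ with Re(c) > 0 and let n ∈ ℕ. The function Ψ_n(x) := c^{1/8} H_n(c^{1/4} x) e^{−c^{1/2} x²/2} (all powers of c principal) satisfies −Ψ_n''(x) + c x² Ψ_n(x) = c^{1/2}(2n+1) Ψ_n(x) for every x ∈ ℝ, and Ψ_n ∈ L²(ℝ); hence λ_n := c^{1/2}(2n+1) is an eigenvalue of the complex harmonic oscillator H_c with eigenfunction Ψ_n. -/

import Mathlib

open Complex MeasureTheory

/-- The `n`-th physicists' Hermite polynomial, as an entire function:
`H_n(z) = (-1)ⁿ e^{z²} (dⁿ/dzⁿ) e^{-z²}`. -/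
noncomputable def physHermite (n : ℕ) (z : ℂ) : ℂ :=
  (-1) ^ n * Complex.exp (z ^ 2) * iteratedDeriv n (fun w : ℂ => Complex.exp (-w ^ 2)) z

/-- The physicists' Hermite polynomials, defined by recurrence. -/
noncomputable def HP : ℕ → Polynomial ℂ
  | 0 => 1
  | n + 1 => 2 * Polynomial.X * HP n - (HP n).derivative

lemma HP_succ (n : ℕ) : HP (n + 1) = 2 * Polynomial.X * HP n - (HP n).derivative := rfl

lemma HP_derivative_succ (n : ℕ) :
    (HP (n + 1)).derivative = Polynomial.C (2 * ((n : ℂ) + 1)) * HP n := by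
  induction n with
  | zero =>
    show (HP 1).derivative = _
    rw [HP_succ]
    simp [HP, map_ofNat]
  | succ n ih =>
    rw [HP_succ (n + 1)]
    simp only [Polynomial.derivative_sub, Polynomial.derivative_mul, Polynomial.derivative_X,
      Polynomial.derivative_ofNat, ih, Polynomial.derivative_C]
    have hd : (HP n).derivative = 2 * Polynomial.X * HP n - HP (n + 1) := by
      rw [HP_succ]; ring
    rw [hd]
    push_cast
    simp only [map_mul, map_add, map_one, map_ofNat]
    ring

lemma HP_ode (n : ℕ) :
    (HP n).derivative.derivative + Polynomial.C (2 * (n : ℂ)) * HP n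
      = 2 * Polynomial.X * (HP n).derivative := by
  cases n with
  | zero => simp [HP]
  | succ n =>
    rw [HP_derivative_succ]
    simp only [Polynomial.derivative_mul, Polynomial.derivative_C]
    have hd : (HP n).derivative = 2 * Polynomial.X * HP n - HP (n + 1) := by
      rw [HP_succ]; ring
    rw [hd, HP_succ]
    push_cast
    simp only [map_mul, map_add, map_one, map_ofNat]
    ring

lemma iter_eq (n : ℕ) : iteratedDeriv n (fun w : ℂ => Complex.exp (-w ^ 2))
    = fun z : ℂ => (-1) ^ n * Polynomial.eval z (HP n) * Complex.exp (-z ^ 2) := by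
  induction n with
  | zero =>
    funext z
    simp [HP]
  | succ n ih =>
    funext z
    rw [iteratedDeriv_succ, ih]
    have h1 : HasDerivAt (fun z : ℂ => Polynomial.eval z (HP n))
        (Polynomial.eval z (HP n).derivative) z := (HP n).hasDerivAt z
    have h2 : HasDerivAt (fun z : ℂ => Complex.exp (-z ^ 2))
        (Complex.exp (-z ^ 2) * -(2 * z ^ 1)) z := ((hasDerivAt_pow 2 z).neg).cexp
    have h := (h1.const_mul ((-1 : ℂ) ^ n)).mul h2
    rw [show deriv (fun z : ℂ => (-1 : ℂ) ^ n * Polynomial.eval z (HP n) * Complex.exp (-z ^ 2)) z = _ from h.deriv]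
    rw [HP_succ]
    simp only [Polynomial.eval_sub, Polynomial.eval_mul, Polynomial.eval_X,
      Polynomial.eval_ofNat]
    ring

lemma phys_eq (n : ℕ) (z : ℂ) : physHermite n z = Polynomial.eval z (HP n) := by
  unfold physHermite
  rw [iter_eq]
  have h1 : ((-1 : ℂ)) ^ n * (-1) ^ n = 1 := by
    rw [← mul_pow]; norm_num
  have h2 : Complex.exp (z ^ 2) * Complex.exp (-z ^ 2) = 1 := by
    rw [← Complex.exp_add]; simp
  calc (-1 : ℂ) ^ n * Complex.exp (z ^ 2) *
        ((-1) ^ n * Polynomial.eval z (HP n) * Complex.exp (-z ^ 2))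
      = ((-1 : ℂ) ^ n * (-1) ^ n) * (Complex.exp (z ^ 2) * Complex.exp (-z ^ 2)) *
          Polynomial.eval z (HP n) := by ring
    _ = Polynomial.eval z (HP n) := by rw [h1, h2]; ring

lemma mono_bound (i : ℕ) {r : ℝ} (hr : 0 < r) (x : ℝ) :
    |x| ^ i * Real.exp (-r * x ^ 2) ≤ 1 + (i.factorial : ℝ) / r ^ i := by
  have hfr : 0 < (i.factorial : ℝ) / r ^ i := by positivity
  rcases le_total |x| 1 with h | h
  · have h1 : |x| ^ i ≤ 1 := pow_le_one₀ (abs_nonneg x) h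
    have h2 : Real.exp (-r * x ^ 2) ≤ 1 := by
      rw [Real.exp_le_one_iff]; nlinarith [sq_nonneg x]
    nlinarith [Real.exp_pos (-r * x ^ 2), pow_nonneg (abs_nonneg x) i]
  · have hx2 : (1 : ℝ) ≤ x ^ 2 := by nlinarith [_root_.sq_abs x]
    have h0 : 0 ≤ r * x ^ 2 := by positivity
    have key : (r * x ^ 2) ^ i / (i.factorial : ℝ) ≤ Real.exp (r * x ^ 2) := by
      refine le_trans ?_ (Real.sum_le_exp_of_nonneg h0 (i + 1))
      exact Finset.single_le_sum (f := fun j => (r * x ^ 2) ^ j / (j.factorial : ℝ))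
        (fun j _ => by positivity) (Finset.self_mem_range_succ i)
    have hxi : |x| ^ i ≤ (x ^ 2) ^ i := pow_le_pow_left₀ (abs_nonneg x) (by nlinarith [_root_.sq_abs x]) i
    have hrewrite : Real.exp (-r * x ^ 2) = (Real.exp (r * x ^ 2))⁻¹ := by
      rw [← Real.exp_neg]; ring_nf
    rw [hrewrite]
    have hinv : (Real.exp (r * x ^ 2))⁻¹ ≤ (i.factorial : ℝ) / (r * x ^ 2) ^ i := by
      have := one_div_le_one_div_of_le (by positivity : (0:ℝ) < (r * x ^ 2) ^ i / i.factorial) key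
      rw [one_div_div] at this
      rw [← one_div]
      exact this
    have hx0 : x ^ 2 ≠ 0 := by nlinarith
    calc |x| ^ i * (Real.exp (r * x ^ 2))⁻¹
        ≤ (x ^ 2) ^ i * ((i.factorial : ℝ) / (r * x ^ 2) ^ i) := by
          apply mul_le_mul hxi hinv (by positivity) (by positivity)
      _ = (i.factorial : ℝ) / r ^ i := by
          rw [mul_pow]; field_simp
      _ ≤ 1 + (i.factorial : ℝ) / r ^ i := by linarith

theorem harmonicOscillator_eigenfunction (c : ℂ) (hc : 0 < c.re) (n : ℕ) :
    (∀ x : ℝ,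
      -(deriv (deriv (fun y : ℝ => c ^ ((1 : ℂ) / 8) *
          physHermite n (c ^ ((1 : ℂ) / 4) * (y : ℂ)) *
          Complex.exp (-c ^ ((1 : ℂ) / 2) * (y : ℂ) ^ 2 / 2))) x) +
        c * (x : ℂ) ^ 2 * (c ^ ((1 : ℂ) / 8) *
          physHermite n (c ^ ((1 : ℂ) / 4) * (x : ℂ)) *
          Complex.exp (-c ^ ((1 : ℂ) / 2) * (x : ℂ) ^ 2 / 2)) =
      c ^ ((1 : ℂ) / 2) * (2 * (n : ℂ) + 1) * (c ^ ((1 : ℂ) / 8) *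
          physHermite n (c ^ ((1 : ℂ) / 4) * (x : ℂ)) *
          Complex.exp (-c ^ ((1 : ℂ) / 2) * (x : ℂ) ^ 2 / 2))) ∧
    MemLp (fun x : ℝ => c ^ ((1 : ℂ) / 8) *
        physHermite n (c ^ ((1 : ℂ) / 4) * (x : ℂ)) *
        Complex.exp (-c ^ ((1 : ℂ) / 2) * (x : ℂ) ^ 2 / 2)) 2 (volume : Measure ℝ) := by
  have hc0 : c ≠ 0 := by
    intro h; rw [h] at hc; simp at hc
  simp only [phys_eq]
  set a := c ^ ((1 : ℂ) / 4) with ha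
  set b := c ^ ((1 : ℂ) / 2) with hb
  set A := c ^ ((1 : ℂ) / 8) with hA
  have haa : a * a = b := by
    rw [ha, hb, ← Complex.cpow_add _ _ hc0]; norm_num
  have hbb : b * b = c := by
    rw [hb, ← Complex.cpow_add _ _ hc0]; norm_num
  -- positivity of Re b
  have hbre : 0 < b.re := by
    have him : b.re * b.re - b.im * b.im = c.re := by
      have := congrArg Complex.re hbb
      rwa [Complex.mul_re] at this
    have hb_nonneg : 0 ≤ b.re := by
      rw [hb, Complex.cpow_def_of_ne_zero hc0, Complex.exp_re]
      apply mul_nonneg (Real.exp_pos _).le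
      apply Real.cos_nonneg_of_mem_Icc
      have hiim : (Complex.log c * ((1 : ℂ) / 2)).im = c.arg / 2 := by
        simp [Complex.mul_im, Complex.log_im]
        ring
      rw [hiim]
      constructor
      · have := Complex.neg_pi_lt_arg c
        linarith
      · have := Complex.arg_le_pi c
        linarith [Real.pi_pos]
    have hne : b.re ≠ 0 := by
      intro h
      rw [h] at him
      nlinarith [sq_nonneg b.im]
    exact lt_of_le_of_ne hb_nonneg (Ne.symm hne)
  -- derivative computations (over ℂ)
  have h2 : ∀ z : ℂ, HasDerivAt (fun z : ℂ => Complex.exp (-b * z ^ 2 / 2))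
      (Complex.exp (-b * z ^ 2 / 2) * (-(b * z))) z := by
    intro z
    have hinner : HasDerivAt (fun z : ℂ => -b * z ^ 2 / 2) (-(b * z)) z := by
      have := ((hasDerivAt_pow 2 z).const_mul (-b)).div_const 2
      refine this.congr_deriv ?_
      push_cast
      ring
    exact hinner.cexp
  have heval : ∀ (p : Polynomial ℂ) (z : ℂ), HasDerivAt (fun z : ℂ => Polynomial.eval (a * z) p)
      (Polynomial.eval (a * z) p.derivative * a) z := by
    intro p z
    have hlin : HasDerivAt (fun z : ℂ => a * z) a z := by
      simpa using (hasDerivAt_id z).const_mul a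
    exact (p.hasDerivAt (a * z)).comp z hlin
  have hF1 : ∀ z : ℂ, HasDerivAt
      (fun z : ℂ => A * Polynomial.eval (a * z) (HP n) * Complex.exp (-b * z ^ 2 / 2))
      (A * (a * Polynomial.eval (a * z) (HP n).derivative
          - b * z * Polynomial.eval (a * z) (HP n)) * Complex.exp (-b * z ^ 2 / 2)) z := by
    intro z
    have h := ((heval (HP n) z).const_mul A).mul (h2 z)
    refine h.congr_deriv ?_
    ring
  have hF2 : ∀ z : ℂ, HasDerivAt
      (fun z : ℂ => A * (a * Polynomial.eval (a * z) (HP n).derivative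
          - b * z * Polynomial.eval (a * z) (HP n)) * Complex.exp (-b * z ^ 2 / 2))
      (A * (a * a * Polynomial.eval (a * z) (HP n).derivative.derivative
          - b * Polynomial.eval (a * z) (HP n)
          - 2 * a * b * z * Polynomial.eval (a * z) (HP n).derivative
          + b * b * z ^ 2 * Polynomial.eval (a * z) (HP n))
        * Complex.exp (-b * z ^ 2 / 2)) z := by
    intro z
    have hid : HasDerivAt (fun z : ℂ => b * z) b z := by
      simpa using (hasDerivAt_id z).const_mul b
    have hG : HasDerivAt (fun z : ℂ => a * Polynomial.eval (a * z) (HP n).derivative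
        - b * z * Polynomial.eval (a * z) (HP n))
        (a * (Polynomial.eval (a * z) (HP n).derivative.derivative * a)
          - (b * Polynomial.eval (a * z) (HP n)
            + b * z * (Polynomial.eval (a * z) (HP n).derivative * a))) z :=
      ((heval (HP n).derivative z).const_mul a).sub (hid.mul (heval (HP n) z))
    have h := (hG.const_mul A).mul (h2 z)
    refine h.congr_deriv ?_
    ring
  constructor
  · intro x
    have hstep1 : (deriv fun y : ℝ =>
        A * Polynomial.eval (a * (y : ℂ)) (HP n) * Complex.exp (-b * (y : ℂ) ^ 2 / 2))
        = fun y : ℝ => A * (a * Polynomial.eval (a * (y : ℂ)) (HP n).derivative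
            - b * (y : ℂ) * Polynomial.eval (a * (y : ℂ)) (HP n))
          * Complex.exp (-b * (y : ℂ) ^ 2 / 2) := by
      funext y
      exact ((hF1 (y : ℂ)).comp_ofReal).deriv
    rw [hstep1]
    have hstep2 : deriv (fun y : ℝ => A * (a * Polynomial.eval (a * (y : ℂ)) (HP n).derivative
            - b * (y : ℂ) * Polynomial.eval (a * (y : ℂ)) (HP n))
          * Complex.exp (-b * (y : ℂ) ^ 2 / 2)) x
        = A * (a * a * Polynomial.eval (a * (x : ℂ)) (HP n).derivative.derivative
          - b * Polynomial.eval (a * (x : ℂ)) (HP n)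
          - 2 * a * b * (x : ℂ) * Polynomial.eval (a * (x : ℂ)) (HP n).derivative
          + b * b * (x : ℂ) ^ 2 * Polynomial.eval (a * (x : ℂ)) (HP n))
        * Complex.exp (-b * (x : ℂ) ^ 2 / 2) :=
      ((hF2 (x : ℂ)).comp_ofReal).deriv
    rw [hstep2]
    have hode : Polynomial.eval (a * (x : ℂ)) (HP n).derivative.derivative
        = 2 * (a * (x : ℂ)) * Polynomial.eval (a * (x : ℂ)) (HP n).derivative
          - 2 * (n : ℂ) * Polynomial.eval (a * (x : ℂ)) (HP n) := by
      have := congrArg (Polynomial.eval (a * (x : ℂ))) (HP_ode n)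
      simp only [Polynomial.eval_add, Polynomial.eval_mul, Polynomial.eval_C,
        Polynomial.eval_X, Polynomial.eval_ofNat] at this
      linear_combination this
    rw [hode, ← hbb, ← haa]
    ring
  · -- L² membership
    have hcont : Continuous (fun x : ℝ =>
        A * Polynomial.eval (a * (x : ℂ)) (HP n) * Complex.exp (-b * (x : ℂ) ^ 2 / 2)) := by
      apply Continuous.mul
      · exact continuous_const.mul
          ((HP n).continuous.comp (continuous_const.mul Complex.continuous_ofReal))
      · exact Complex.continuous_exp.comp
          ((continuous_const.mul (Complex.continuous_ofReal.pow 2)).div_const 2)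
    set C : ℝ := ∑ i ∈ Finset.range ((HP n).natDegree + 1),
      ‖A‖ * ‖(HP n).coeff i‖ * ‖a‖ ^ i * (1 + (i.factorial : ℝ) / (b.re / 4) ^ i) with hC
    have hbound : ∀ x : ℝ,
        ‖A * Polynomial.eval (a * (x : ℂ)) (HP n) * Complex.exp (-b * (x : ℂ) ^ 2 / 2)‖
          ≤ C * Real.exp (-(b.re / 4) * x ^ 2) := by
      intro x
      have hexp : ‖Complex.exp (-b * (x : ℂ) ^ 2 / 2)‖ = Real.exp (-(b.re / 2) * x ^ 2) := by
        rw [Complex.norm_exp]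
        congr 1
        have harg : -b * (x : ℂ) ^ 2 / 2 = ((-(x ^ 2) / 2 : ℝ) : ℂ) * b := by
          push_cast; ring
        rw [harg, Complex.re_ofReal_mul]
        ring
      have hsplit : Real.exp (-(b.re / 2) * x ^ 2)
          = Real.exp (-(b.re / 4) * x ^ 2) * Real.exp (-(b.re / 4) * x ^ 2) := by
        rw [← Real.exp_add]; ring_nf
      have hev : ‖Polynomial.eval (a * (x : ℂ)) (HP n)‖
          ≤ ∑ i ∈ Finset.range ((HP n).natDegree + 1), ‖(HP n).coeff i‖ * ‖a‖ ^ i * |x| ^ i := by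
        rw [Polynomial.eval_eq_sum_range]
        refine (norm_sum_le _ _).trans ?_
        apply Finset.sum_le_sum
        intro i _
        apply le_of_eq
        rw [norm_mul, norm_pow, norm_mul, Complex.norm_real, Real.norm_eq_abs, mul_pow]
        ring
      calc ‖A * Polynomial.eval (a * (x : ℂ)) (HP n) * Complex.exp (-b * (x : ℂ) ^ 2 / 2)‖
          = ‖A‖ * ‖Polynomial.eval (a * (x : ℂ)) (HP n)‖
            * ‖Complex.exp (-b * (x : ℂ) ^ 2 / 2)‖ := by rw [norm_mul, norm_mul]
        _ ≤ ‖A‖ * (∑ i ∈ Finset.range ((HP n).natDegree + 1),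
              ‖(HP n).coeff i‖ * ‖a‖ ^ i * |x| ^ i)
            * (Real.exp (-(b.re / 4) * x ^ 2) * Real.exp (-(b.re / 4) * x ^ 2)) := by
            rw [hexp, hsplit]
            gcongr
        _ = ∑ i ∈ Finset.range ((HP n).natDegree + 1),
              (‖A‖ * ‖(HP n).coeff i‖ * ‖a‖ ^ i
                * (|x| ^ i * Real.exp (-(b.re / 4) * x ^ 2)))
              * Real.exp (-(b.re / 4) * x ^ 2) := by
            rw [Finset.mul_sum, Finset.sum_mul]
            apply Finset.sum_congr rfl
            intro i _
            ring
        _ ≤ ∑ i ∈ Finset.range ((HP n).natDegree + 1),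
              (‖A‖ * ‖(HP n).coeff i‖ * ‖a‖ ^ i
                * (1 + (i.factorial : ℝ) / (b.re / 4) ^ i))
              * Real.exp (-(b.re / 4) * x ^ 2) := by
            apply Finset.sum_le_sum
            intro i _
            gcongr
            exact mono_bound i (by linarith) x
        _ = C * Real.exp (-(b.re / 4) * x ^ 2) := by
            rw [hC, Finset.sum_mul]
    rw [memLp_two_iff_integrable_sq_norm hcont.aestronglyMeasurable]
    have hCnonneg : 0 ≤ C := by
      have := (norm_nonneg (A * Polynomial.eval (a * (0 : ℂ)) (HP n)
        * Complex.exp (-b * (0 : ℂ) ^ 2 / 2))).trans (by simpa using hbound 0)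
      nlinarith [Real.exp_pos (-(b.re / 4) * (0:ℝ) ^ 2), this]
    apply Integrable.mono'
      ((integrable_exp_neg_mul_sq (by linarith : (0:ℝ) < b.re / 2)).const_mul (C ^ 2))
    · exact (hcont.norm.pow 2).aestronglyMeasurable
    · filter_upwards with x
      rw [Real.norm_eq_abs, _root_.abs_of_nonneg (pow_nonneg (norm_nonneg _) 2)]
      calc ‖A * Polynomial.eval (a * (x : ℂ)) (HP n) * Complex.exp (-b * (x : ℂ) ^ 2 / 2)‖ ^ 2
          ≤ (C * Real.exp (-(b.re / 4) * x ^ 2)) ^ 2 := by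
            apply pow_le_pow_left₀ (norm_nonneg _) (hbound x)
        _ = C ^ 2 * Real.exp (-(b.re / 2) * x ^ 2) := by
            rw [mul_pow, sq (Real.exp _), ← Real.exp_add]
            congr 1
            ring
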